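/- Suppose μ_i are Radon measures on an open U ⊆ ℝⁿ converging strongly to μ, all of the form μ_i = Hᵐ ⌊ θ_i for nonnegative Borel functions θ_i (m-rectifiable weights). Then for every open G with compact closure in U, ∫_G |θ(x) − θ_i(x)| dHᵐ(x) = sup{ μ(g) − μ_i(g) : g ∈ 𝒦(U), supp g ⊆ G, |g| ≤ 1 } → 0 as i → ∞, where μ = Hᵐ ⌊ θ; consequently θ_i → θ in L¹_loc(Hᵐ) and a subsequence of θ_i(x) converges to θ(x) for Hᵐ-a.e. x. In particular, if each θ_i is integer-valued Hᵐ-a.e., so is θ. -/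

import Mathlib

open MeasureTheory Filter Metric Set Topology
open scoped ENNReal


lemma intOn_of_lintegral {X : Type*} [MeasurableSpace X] (ν : Measure X) {f : X → ℝ}
    (hf : Measurable f) (h0 : ∀ x, 0 ≤ f x) {S : Set X}
    (hfin : (∫⁻ x in S, ENNReal.ofReal (f x) ∂ν) < ∞) : IntegrableOn f S ν := by
  refine ⟨hf.aestronglyMeasurable, ?_⟩
  rw [hasFiniteIntegral_iff_ofReal (ae_of_all _ h0)]
  exact hfin

lemma bound_integral_mul {X : Type*} [MeasurableSpace X] {ν : Measure X} {g f : X → ℝ}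
    {S : Set X}
    (hb : ∀ x, |g x| ≤ 1) (hg : AEStronglyMeasurable g (ν.restrict S))
    (hint : IntegrableOn f S ν) :
    |∫ x in S, g x * f x ∂ν| ≤ ∫ x in S, |f x| ∂ν := by
  have hint2 : IntegrableOn (fun x => g x * f x) S ν :=
    Integrable.bdd_mul (c := 1) hint hg (ae_of_all _ fun x => by simpa [Real.norm_eq_abs] using hb x)
  calc |∫ x in S, g x * f x ∂ν| ≤ ∫ x in S, |g x * f x| ∂ν := by
        have := norm_integral_le_integral_norm (μ := ν.restrict S) (fun x => g x * f x)
        simp only [Real.norm_eq_abs] at this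
        exact this
    _ ≤ ∫ x in S, |f x| ∂ν := by
        refine integral_mono hint2.abs hint.abs (fun x => ?_)
        rw [abs_mul]
        calc |g x| * |f x| ≤ 1 * |f x| :=
              mul_le_mul_of_nonneg_right (hb x) (abs_nonneg _)
          _ = |f x| := one_mul _

set_option maxHeartbeats 1000000 in
lemma duality {n : ℕ} (ν : Measure (EuclideanSpace ℝ (Fin n)))
    {F : EuclideanSpace ℝ (Fin n) → ℝ} (hF : Measurable F)
    {G : Set (EuclideanSpace ℝ (Fin n))} (hGo : IsOpen G)
    (hfin : (∫⁻ x in G, ENNReal.ofReal |F x| ∂ν) < ∞) :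
    ∫ x in G, |F x| ∂ν =
      ⨆ g : {g : C(EuclideanSpace ℝ (Fin n), ℝ) // tsupport g ⊆ G ∧ ∀ x, |g x| ≤ 1},
        ∫ x in G, g.1 x * F x ∂ν := by
  set σ : Measure (EuclideanSpace ℝ (Fin n)) := (ν.restrict G).withDensity fun x => ENNReal.ofReal |F x| with hσdef
  haveI : IsFiniteMeasure σ := by
    constructor
    rw [hσdef, withDensity_apply _ MeasurableSet.univ, Measure.restrict_univ]
    exact hfin
  have hσ_apply : ∀ S : Set (EuclideanSpace ℝ (Fin n)), MeasurableSet S → S ⊆ G →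
      σ S = ∫⁻ x in S, ENNReal.ofReal |F x| ∂ν := by
    intro S hS hSG
    rw [hσdef, withDensity_apply _ hS, Measure.restrict_restrict hS,
      inter_eq_self_of_subset_left hSG]
  have hintF : IntegrableOn (fun x => |F x|) G ν :=
    intOn_of_lintegral ν hF.abs (fun x => abs_nonneg _) hfin
  have hintF' : IntegrableOn F G ν := by
    refine ⟨hF.aestronglyMeasurable, ?_⟩
    have h2 : HasFiniteIntegral (fun x => ‖F x‖) (ν.restrict G) := by
      simpa [Real.norm_eq_abs] using hintF.2
    exact (hasFiniteIntegral_norm_iff F).mp h2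
  haveI hne : Nonempty {g : C(EuclideanSpace ℝ (Fin n), ℝ) // tsupport g ⊆ G ∧ ∀ x, |g x| ≤ 1} :=
    ⟨⟨0, by simp [tsupport, Function.support], fun x => by simp⟩⟩
  have hub : ∀ g : {g : C(EuclideanSpace ℝ (Fin n), ℝ) // tsupport g ⊆ G ∧ ∀ x, |g x| ≤ 1},
      ∫ x in G, g.1 x * F x ∂ν ≤ ∫ x in G, |F x| ∂ν := fun g =>
    le_trans (le_abs_self _)
      (bound_integral_mul g.2.2 g.1.continuous.aestronglyMeasurable.restrict hintF')
  have hbdd : BddAbove (Set.range fun g : {g : C(EuclideanSpace ℝ (Fin n), ℝ) // tsupport g ⊆ G ∧ ∀ x, |g x| ≤ 1} =>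
      ∫ x in G, g.1 x * F x ∂ν) := ⟨∫ x in G, |F x| ∂ν, by rintro _ ⟨g, rfl⟩; exact hub g⟩
  refine le_antisymm ?_ (ciSup_le hub)
  refine le_of_forall_pos_le_add (fun ε hε => ?_)
  -- positive and negative parts
  set P : Set (EuclideanSpace ℝ (Fin n)) := G ∩ {x | 0 < F x} with hPdef
  set N : Set (EuclideanSpace ℝ (Fin n)) := G ∩ {x | F x < 0} with hNdef
  have hPm : MeasurableSet P := hGo.measurableSet.inter (measurableSet_lt measurable_const hF)
  have hNm : MeasurableSet N := hGo.measurableSet.inter (measurableSet_lt hF measurable_const)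
  have hε4 : ENNReal.ofReal (ε / 4) ≠ 0 := (ENNReal.ofReal_pos.mpr (by linarith)).ne'
  obtain ⟨K₁, hK₁P, hK₁c, hK₁lt⟩ := hPm.exists_isCompact_lt_add (measure_ne_top σ P) hε4
  obtain ⟨K₂, hK₂N, hK₂c, hK₂lt⟩ := hNm.exists_isCompact_lt_add (measure_ne_top σ N) hε4
  have hK₁d : σ (P \ K₁) < ENNReal.ofReal (ε / 4) :=
    measure_diff_lt_of_lt_add hK₁c.isClosed.measurableSet.nullMeasurableSet hK₁P
      (measure_ne_top σ K₁) hK₁lt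
  have hK₂d : σ (N \ K₂) < ENNReal.ofReal (ε / 4) :=
    measure_diff_lt_of_lt_add hK₂c.isClosed.measurableSet.nullMeasurableSet hK₂N
      (measure_ne_top σ K₂) hK₂lt
  have hdisj : Disjoint K₁ K₂ := by
    refine Set.disjoint_left.mpr fun x hx1 hx2 => ?_
    have h1 := (hK₁P hx1).2
    have h2 := (hK₂N hx2).2
    simp only [Set.mem_setOf_eq] at h1 h2
    linarith
  have hKG : K₁ ∪ K₂ ⊆ G :=
    Set.union_subset (hK₁P.trans Set.inter_subset_left) (hK₂N.trans Set.inter_subset_left)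
  obtain ⟨k, hkc, hk_int, hkG⟩ := exists_compact_between (hK₁c.union hK₂c) hGo hKG
  have ht₁ : IsClosed ((interior k)ᶜ ∪ K₂) := isOpen_interior.isClosed_compl.union hK₂c.isClosed
  have ht₂ : IsClosed ((interior k)ᶜ ∪ K₁) := isOpen_interior.isClosed_compl.union hK₁c.isClosed
  have hd₁ : Disjoint K₁ ((interior k)ᶜ ∪ K₂) := by
    refine Set.disjoint_union_right.mpr ⟨?_, hdisj⟩
    exact disjoint_compl_right_iff_subset.mpr (Set.subset_union_left.trans hk_int)
  have hd₂ : Disjoint K₂ ((interior k)ᶜ ∪ K₁) := by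
    refine Set.disjoint_union_right.mpr ⟨?_, hdisj.symm⟩
    exact disjoint_compl_right_iff_subset.mpr (Set.subset_union_right.trans hk_int)
  obtain ⟨g₁, hg₁K, hg₁t, hg₁supp, hg₁01⟩ := exists_continuous_one_zero_of_isCompact hK₁c ht₁ hd₁
  obtain ⟨g₂, hg₂K, hg₂t, hg₂supp, hg₂01⟩ := exists_continuous_one_zero_of_isCompact hK₂c ht₂ hd₂
  set g : C(EuclideanSpace ℝ (Fin n), ℝ) := g₁ - g₂ with hgdef
  have hgx : ∀ x, g x = g₁ x - g₂ x := fun x => rfl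
  have hb : ∀ x, |g x| ≤ 1 := by
    intro x
    have h1 := hg₁01 x
    have h2 := hg₂01 x
    rw [Set.mem_Icc] at h1 h2
    rw [hgx, abs_le]
    constructor <;> linarith
  have hKm : MeasurableSet (K₁ ∪ K₂) := (hK₁c.union hK₂c).isClosed.measurableSet
  have hsupp : tsupport g ⊆ G := by
    have hsub : Function.support ⇑g ⊆ interior k := by
      intro x hx
      by_contra hxk
      have e1 : g₁ x = 0 := hg₁t (Or.inl hxk)
      have e2 : g₂ x = 0 := hg₂t (Or.inl hxk)
      exact hx (by rw [hgx, e1, e2, sub_zero])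
    calc tsupport g ⊆ closure (interior k) := closure_mono hsub
      _ ⊆ k := closure_minimal interior_subset hkc.isClosed
      _ ⊆ G := hkG
  have hgK₁ : ∀ x ∈ K₁, g x = 1 := by
    intro x hx
    have e2 : g₂ x = 0 := hg₂t (Or.inr hx)
    have e1 : g₁ x = 1 := hg₁K hx
    rw [hgx, e1, e2, sub_zero]
  have hgK₂ : ∀ x ∈ K₂, g x = -1 := by
    intro x hx
    have e1 : g₁ x = 0 := hg₁t (Or.inr hx)
    have e2 : g₂ x = 1 := hg₂K hx
    rw [hgx, e1, e2]; ring
  -- the error estimate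
  have hint_g : IntegrableOn (fun x => g x * F x) G ν :=
    Integrable.bdd_mul (c := 1) hintF' g.continuous.aestronglyMeasurable.restrict
      (ae_of_all _ fun x => by simpa [Real.norm_eq_abs] using hb x)
  set h : EuclideanSpace ℝ (Fin n) → ℝ := fun x => |F x| - g x * F x with hhdef
  have hint_h : IntegrableOn h G ν := hintF.sub hint_g
  have hzero : ∫ x in G ∩ (K₁ ∪ K₂), h x ∂ν = 0 := by
    have : Set.EqOn h (fun _ => (0 : ℝ)) (G ∩ (K₁ ∪ K₂)) := by
      intro x hx
      rcases hx.2 with hx1 | hx2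
      · have hF0 : 0 < F x := (hK₁P hx1).2
        simp only [hhdef, hgK₁ x hx1, one_mul, abs_of_pos hF0, sub_self]
      · have hF0 : F x < 0 := (hK₂N hx2).2
        simp only [hhdef, hgK₂ x hx2, abs_of_neg hF0, neg_mul, one_mul, sub_neg_eq_add,
          neg_add_cancel]
    rw [setIntegral_congr_fun (hGo.measurableSet.inter hKm) this]
    simp
  have hsplit := integral_inter_add_diff (μ := ν) (s := G) hKm hint_h
  have hstep1 : ∫ x in G, h x ∂ν = ∫ x in G \ (K₁ ∪ K₂), h x ∂ν := by
    rw [← hsplit, hzero, zero_add]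
  set S : Set (EuclideanSpace ℝ (Fin n)) := G \ (K₁ ∪ K₂) with hSdef
  have hSm : MeasurableSet S := hGo.measurableSet.diff hKm
  have hSG : S ⊆ G := Set.diff_subset
  -- σ S is small
  have hσS : σ S ≤ ENNReal.ofReal (ε / 2) := by
    set Z : Set (EuclideanSpace ℝ (Fin n)) := G ∩ {x | F x = 0} with hZdef
    have hZm : MeasurableSet Z := hGo.measurableSet.inter (hF (measurableSet_singleton 0))
    have hσZ : σ Z = 0 := by
      rw [hσ_apply Z hZm Set.inter_subset_left]
      have : ∀ᵐ x ∂ν, x ∈ Z → ENNReal.ofReal |F x| = 0 := by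
        refine ae_of_all _ fun x hx => ?_
        have : F x = 0 := hx.2
        simp [this]
      rw [setLIntegral_congr_fun_ae hZm this]
      simp
    have hsub : S ⊆ (P \ K₁) ∪ (N \ K₂) ∪ Z := by
      intro x hx
      rcases lt_trichotomy (F x) 0 with hlt | heq | hgt
      · exact Or.inl (Or.inr ⟨⟨hx.1, hlt⟩, fun hk => hx.2 (Or.inr hk)⟩)
      · exact Or.inr ⟨hx.1, heq⟩
      · exact Or.inl (Or.inl ⟨⟨hx.1, hgt⟩, fun hk => hx.2 (Or.inl hk)⟩)
    calc σ S ≤ σ ((P \ K₁) ∪ (N \ K₂) ∪ Z) := measure_mono hsub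
      _ ≤ σ (P \ K₁) + σ (N \ K₂) + σ Z :=
          le_trans (measure_union_le _ _) (add_le_add (measure_union_le _ _) le_rfl)
      _ ≤ ENNReal.ofReal (ε / 4) + ENNReal.ofReal (ε / 4) + 0 :=
          add_le_add (add_le_add hK₁d.le hK₂d.le) hσZ.le
      _ = ENNReal.ofReal (ε / 2) := by
          rw [add_zero, ← ENNReal.ofReal_add (by linarith) (by linarith)]
          congr 1
          ring
  have hreal : ∫ x in S, |F x| ∂ν = (σ S).toReal := by
    rw [hσ_apply S hSm hSG,
      integral_eq_lintegral_of_nonneg_ae (ae_of_all _ fun x => abs_nonneg (F x))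
        hF.abs.aestronglyMeasurable]
  have hSsmall : ∫ x in S, |F x| ∂ν ≤ ε / 2 := by
    rw [hreal]
    calc (σ S).toReal ≤ (ENNReal.ofReal (ε / 2)).toReal :=
          ENNReal.toReal_mono ENNReal.ofReal_ne_top hσS
      _ = ε / 2 := ENNReal.toReal_ofReal (by linarith)
  have hstep2 : ∫ x in S, h x ∂ν ≤ ε := by
    have hhle : ∀ x, h x ≤ 2 * |F x| := by
      intro x
      have h1 : |g x * F x| ≤ |F x| := by
        rw [abs_mul]
        calc |g x| * |F x| ≤ 1 * |F x| := mul_le_mul_of_nonneg_right (hb x) (abs_nonneg _)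
          _ = |F x| := one_mul _
      have h2 : -(|F x|) ≤ g x * F x := (abs_le.mp h1).1
      simp only [hhdef]
      linarith
    calc ∫ x in S, h x ∂ν ≤ ∫ x in S, 2 * |F x| ∂ν :=
          integral_mono (hint_h.mono_set Set.diff_subset)
            ((hintF.mono_set Set.diff_subset).const_mul 2) hhle
      _ = 2 * ∫ x in S, |F x| ∂ν := integral_const_mul 2 _
      _ ≤ 2 * (ε / 2) := by linarith [hSsmall]
      _ = ε := by ring
  have hsub_int : ∫ x in G, h x ∂ν = ∫ x in G, |F x| ∂ν - ∫ x in G, g x * F x ∂ν :=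
    integral_sub hintF hint_g
  have hfinal : ∫ x in G, |F x| ∂ν - ∫ x in G, g x * F x ∂ν ≤ ε := by
    rw [← hsub_int, hstep1]
    exact hstep2
  calc ∫ x in G, |F x| ∂ν ≤ (∫ x in G, g x * F x ∂ν) + ε := by linarith
    _ ≤ (⨆ g' : {g' : C(EuclideanSpace ℝ (Fin n), ℝ) // tsupport g' ⊆ G ∧ ∀ x, |g' x| ≤ 1},
          ∫ x in G, g'.1 x * F x ∂ν) + ε :=
        add_le_add (le_ciSup hbdd ⟨g, hsupp, hb⟩) (le_refl ε)

/-- A function vanishing off `G ⊆ U` has the same integral over `U` as over `G`. -/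
lemma setIntegral_eq_of_zero_off {X : Type*} [MeasurableSpace X] {ν : Measure X} {f : X → ℝ} {G U : Set X}
    (hGU : G ⊆ U) (hG : MeasurableSet G) (hUm : MeasurableSet U)
    (h0 : ∀ x ∉ G, f x = 0) (hint : IntegrableOn f G ν) :
    ∫ x in U, f x ∂ν = ∫ x in G, f x ∂ν := by
  have h1 : U = G ∪ (U \ G) := by rw [union_diff_cancel hGU]
  have h2 : IntegrableOn f (U \ G) ν := by
    refine (integrableOn_zero (μ := ν)).congr_fun (fun x hx => (h0 x hx.2).symm) (hUm.diff hG)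
  rw [h1, setIntegral_union disjoint_sdiff_right (hUm.diff hG) hint h2]
  have : ∫ x in U \ G, f x ∂ν = 0 := by
    rw [setIntegral_congr_fun (hUm.diff hG) (fun x hx => h0 x hx.2)]
    simp
  rw [this, add_zero]


/-- Exhaustion of an open set by open sets with compact closure inside it. -/
lemma exists_exhaustion {n : ℕ} {U : Set (EuclideanSpace ℝ (Fin n))} (hU : IsOpen U) :
    ∃ s : ℕ → Set (EuclideanSpace ℝ (Fin n)), (∀ j, IsOpen (s j)) ∧ (∀ j, s j ⊆ U) ∧
      (∀ j, IsCompact (closure (s j))) ∧ (∀ j, closure (s j) ⊆ U) ∧ Monotone s ∧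
      U ⊆ ⋃ j, s j := by
  set s : ℕ → Set (EuclideanSpace ℝ (Fin n)) :=
    fun j => {x | ((j : ℝ≥0∞) + 1)⁻¹ < EMetric.infEdist x Uᶜ} ∩ ball 0 (j + 1) with hsdef
  have hopen : ∀ j, IsOpen (s j) :=
    fun j => (isOpen_lt continuous_const EMetric.continuous_infEdist).inter isOpen_ball
  have hclosU : ∀ j, closure (s j) ⊆ U := by
    intro j
    have h1 : closure (s j) ⊆ {x | ((j : ℝ≥0∞) + 1)⁻¹ ≤ EMetric.infEdist x Uᶜ} := by
      refine closure_minimal ?_ (isClosed_le continuous_const EMetric.continuous_infEdist)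
      intro x hx
      have h1 : ((j : ℝ≥0∞) + 1)⁻¹ < EMetric.infEdist x Uᶜ := hx.1
      exact le_of_lt h1
    refine h1.trans fun x hx => ?_
    by_contra hxU
    have h0 : EMetric.infEdist x Uᶜ = 0 := EMetric.infEdist_zero_of_mem hxU
    rw [Set.mem_setOf_eq, h0, nonpos_iff_eq_zero] at hx
    simpa using hx
  have hcomp : ∀ j, IsCompact (closure (s j)) := by
    intro j
    refine (isCompact_closedBall (0 : EuclideanSpace ℝ (Fin n)) (j + 1)).of_isClosed_subset
      isClosed_closure ?_
    calc closure (s j) ⊆ closure (ball 0 (j + 1)) := closure_mono Set.inter_subset_right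
      _ ⊆ closedBall 0 (j + 1) := closure_ball_subset_closedBall
  have hmono : Monotone s := by
    refine monotone_nat_of_le_succ fun j => ?_
    intro x hx
    constructor
    · have h1 : ((j : ℝ≥0∞) + 1 + 1)⁻¹ ≤ ((j : ℝ≥0∞) + 1)⁻¹ := by gcongr; simp
      have h2 : ((j : ℝ≥0∞) + 1)⁻¹ < EMetric.infEdist x Uᶜ := hx.1
      have h3 : ((↑(j + 1) : ℝ≥0∞) + 1)⁻¹ ≤ ((j : ℝ≥0∞) + 1)⁻¹ := by
        refine ENNReal.inv_le_inv.mpr ?_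
        push_cast
        exact le_self_add
      show ((↑(j + 1) : ℝ≥0∞) + 1)⁻¹ < EMetric.infEdist x Uᶜ
      exact lt_of_le_of_lt h3 h2
    · exact ball_subset_ball (by push_cast; linarith) hx.2
  refine ⟨s, hopen, fun j => subset_closure.trans (hclosU j), hcomp, hclosU, hmono, ?_⟩
  intro x hx
  have hpos : 0 < EMetric.infEdist x Uᶜ := by
    unfold EMetric.infEdist
    rw [EMetric.infEdist_pos_iff_notMem_closure, hU.isClosed_compl.closure_eq]
    exact fun h => h hx
  obtain ⟨j₁, hj₁⟩ := ENNReal.exists_inv_nat_lt hpos.ne'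
  set j : ℕ := max j₁ ⌈dist x 0⌉₊ with hjdef
  refine Set.mem_iUnion.mpr ⟨j, ?_, ?_⟩
  · refine lt_of_le_of_lt ?_ hj₁
    have : (j₁ : ℝ≥0∞) ≤ (j : ℝ≥0∞) + 1 :=
      le_trans (Nat.cast_le.mpr (le_max_left _ _)) le_self_add
    exact ENNReal.inv_le_inv.mpr this
  · rw [mem_ball]
    calc dist x 0 ≤ ⌈dist x 0⌉₊ := Nat.le_ceil _
      _ ≤ (j : ℝ) := Nat.cast_le.mpr (le_max_right _ _)
      _ < j + 1 := by linarith


lemma ae_restrict_of_iUnion {X : Type*} [MeasurableSpace X] (ν : Measure X) {s : ℕ → Set X}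
    (hs : ∀ j, MeasurableSet (s j)) {U : Set X} (hUm : MeasurableSet U)
    (hUs : U ⊆ ⋃ j, s j) {p : X → Prop} (h : ∀ j, ∀ᵐ x ∂ν.restrict (s j), p x) :
    ∀ᵐ x ∂ν.restrict U, p x := by
  rw [ae_iff, Measure.restrict_apply' hUm]
  have h' : ∀ j, ν ({x | ¬ p x} ∩ s j) = 0 := fun j => by
    have hj := h j
    rw [ae_iff, Measure.restrict_apply' (hs j)] at hj
    exact hj
  refine measure_mono_null (fun x hx => ?_) (measure_iUnion_null h')
  obtain ⟨j, hj⟩ := Set.mem_iUnion.mp (hUs hx.2)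
  exact Set.mem_iUnion.mpr ⟨j, hx.1, hj⟩


lemma geom_sum_lt_top : ∑' k : ℕ, (ENNReal.ofReal ((1/2 : ℝ) ^ k)) < ∞ := by
  have h : ∀ k : ℕ, ENNReal.ofReal ((1/2 : ℝ) ^ k) = (ENNReal.ofReal (1/2)) ^ k := by
    intro k; rw [ENNReal.ofReal_pow (by norm_num)]
  simp_rw [h]
  rw [ENNReal.tsum_geometric]
  refine ENNReal.inv_lt_top.mpr ?_
  rw [tsub_pos_iff_lt]
  rw [show ENNReal.ofReal (1/2 : ℝ) = 2⁻¹ by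
    rw [ENNReal.ofReal_div_of_pos (by norm_num)]; norm_num]
  norm_num
set_option maxHeartbeats 2000000 in
/-- If `μ i = Hᵐ ⌊ θ i` converge strongly on compacts of `U` to `μ = Hᵐ ⌊ θ₀`, then on
every open `G` with compact closure in `U` the `L¹` distance `∫_G |θ₀ − θ i| dHᵐ`
equals the dual supremum and tends to `0`; a subsequence of `θ i` converges to `θ₀`
`Hᵐ`-a.e. on `U`; and if each `θ i` is integer valued `Hᵐ`-a.e. on `U`, so is `θ₀`. -/
theorem strong_limit_of_rectifiable_weights {n : ℕ} (m : ℕ)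
    (U : Set (EuclideanSpace ℝ (Fin n))) (hU : IsOpen U)
    (θ : ℕ → EuclideanSpace ℝ (Fin n) → ℝ) (θ₀ : EuclideanSpace ℝ (Fin n) → ℝ)
    (hθ : ∀ i, Measurable (θ i)) (hθ₀ : Measurable θ₀)
    (hpos : ∀ i x, 0 ≤ θ i x) (hpos₀ : ∀ x, 0 ≤ θ₀ x)
    (hloc : ∀ K, K ⊆ U → IsCompact K →
      (∫⁻ x in K, ENNReal.ofReal (θ₀ x) ∂(μH[(m : ℝ)] : Measure (EuclideanSpace ℝ (Fin n)))) < ∞ ∧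
      ∀ i, (∫⁻ x in K, ENNReal.ofReal (θ i x) ∂(μH[(m : ℝ)] : Measure (EuclideanSpace ℝ (Fin n)))) < ∞)
    (hconv : ∀ K, K ⊆ U → IsCompact K → Tendsto (fun i =>
      ⨆ g : {g : C(EuclideanSpace ℝ (Fin n), ℝ) // tsupport g ⊆ K ∧ ∀ x, |g x| ≤ 1},
        |(∫ x in U, g.1 x * θ₀ x ∂(μH[(m : ℝ)] : Measure (EuclideanSpace ℝ (Fin n)))) -
          ∫ x in U, g.1 x * θ i x ∂(μH[(m : ℝ)] : Measure (EuclideanSpace ℝ (Fin n)))|)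
      atTop (𝓝 0)) :
    (∀ G, G ⊆ U → IsOpen G → IsCompact (closure G) → closure G ⊆ U →
      (∀ i, (∫ x in G, |θ₀ x - θ i x| ∂(μH[(m : ℝ)] : Measure (EuclideanSpace ℝ (Fin n)))) =
        ⨆ g : {g : C(EuclideanSpace ℝ (Fin n), ℝ) // tsupport g ⊆ G ∧ ∀ x, |g x| ≤ 1},
          ((∫ x in U, g.1 x * θ₀ x ∂(μH[(m : ℝ)] : Measure (EuclideanSpace ℝ (Fin n)))) -
            ∫ x in U, g.1 x * θ i x ∂(μH[(m : ℝ)] : Measure (EuclideanSpace ℝ (Fin n))))) ∧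
      Tendsto (fun i =>
          ∫ x in G, |θ₀ x - θ i x| ∂(μH[(m : ℝ)] : Measure (EuclideanSpace ℝ (Fin n))))
        atTop (𝓝 0)) ∧
    (∃ φ : ℕ → ℕ, StrictMono φ ∧
      ∀ᵐ x ∂((μH[(m : ℝ)] : Measure (EuclideanSpace ℝ (Fin n))).restrict U),
        Tendsto (fun k => θ (φ k) x) atTop (𝓝 (θ₀ x))) ∧
    ((∀ i, ∀ᵐ x ∂((μH[(m : ℝ)] : Measure (EuclideanSpace ℝ (Fin n))).restrict U),
        ∃ k : ℕ, θ i x = k) →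
      ∀ᵐ x ∂((μH[(m : ℝ)] : Measure (EuclideanSpace ℝ (Fin n))).restrict U),
        ∃ k : ℕ, θ₀ x = k) := by
  set ν : Measure (EuclideanSpace ℝ (Fin n)) := μH[(m : ℝ)] with hνdef
  -- integrability on compacts
  have hIntθ₀ : ∀ K, K ⊆ U → IsCompact K → IntegrableOn θ₀ K ν :=
    fun K hKU hKc => intOn_of_lintegral ν hθ₀ hpos₀ (hloc K hKU hKc).1
  have hIntθ : ∀ K, K ⊆ U → IsCompact K → ∀ i, IntegrableOn (θ i) K ν :=
    fun K hKU hKc i => intOn_of_lintegral ν (hθ i) (hpos i) ((hloc K hKU hKc).2 i)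
  -- Part 1
  have hpart1 : ∀ G, G ⊆ U → IsOpen G → IsCompact (closure G) → closure G ⊆ U →
      (∀ i, (∫ x in G, |θ₀ x - θ i x| ∂ν) =
        ⨆ g : {g : C(EuclideanSpace ℝ (Fin n), ℝ) // tsupport g ⊆ G ∧ ∀ x, |g x| ≤ 1},
          ((∫ x in U, g.1 x * θ₀ x ∂ν) - ∫ x in U, g.1 x * θ i x ∂ν)) ∧
      Tendsto (fun i => ∫ x in G, |θ₀ x - θ i x| ∂ν) atTop (𝓝 0) := by
    intro G hGU hGo hGc hGcl
    have hIθ₀G : IntegrableOn θ₀ G ν := (hIntθ₀ _ hGcl hGc).mono_set subset_closure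
    have hIθG : ∀ i, IntegrableOn (θ i) G ν :=
      fun i => (hIntθ _ hGcl hGc i).mono_set subset_closure
    have habs_le : ∀ i x, ENNReal.ofReal |θ₀ x - θ i x| ≤
        ENNReal.ofReal (θ₀ x) + ENNReal.ofReal (θ i x) := by
      intro i x
      rw [← ENNReal.ofReal_add (hpos₀ x) (hpos i x)]
      refine ENNReal.ofReal_le_ofReal ?_
      rcases abs_cases (θ₀ x - θ i x) with ⟨h1, _⟩ | ⟨h1, _⟩ <;>
        [skip; skip] <;> rw [h1] <;> [linarith [hpos i x]; linarith [hpos₀ x]]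
    have hfinF : ∀ i, (∫⁻ x in G, ENNReal.ofReal |θ₀ x - θ i x| ∂ν) < ∞ := by
      intro i
      calc (∫⁻ x in G, ENNReal.ofReal |θ₀ x - θ i x| ∂ν)
          ≤ ∫⁻ x in G, (ENNReal.ofReal (θ₀ x) + ENNReal.ofReal (θ i x)) ∂ν :=
            lintegral_mono fun x => habs_le i x
        _ = (∫⁻ x in G, ENNReal.ofReal (θ₀ x) ∂ν) + ∫⁻ x in G, ENNReal.ofReal (θ i x) ∂ν :=
            lintegral_add_left (ENNReal.measurable_ofReal.comp hθ₀) _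
        _ ≤ (∫⁻ x in closure G, ENNReal.ofReal (θ₀ x) ∂ν) +
              ∫⁻ x in closure G, ENNReal.ofReal (θ i x) ∂ν :=
            add_le_add (lintegral_mono_set subset_closure) (lintegral_mono_set subset_closure)
        _ < ∞ := ENNReal.add_lt_top.mpr ⟨(hloc _ hGcl hGc).1, (hloc _ hGcl hGc).2 i⟩
    -- rewrite the sup using compact support
    have hintmul : ∀ (g : C(EuclideanSpace ℝ (Fin n), ℝ)) (f : EuclideanSpace ℝ (Fin n) → ℝ)
        (S : Set (EuclideanSpace ℝ (Fin n))), (∀ x, |g x| ≤ 1) → IntegrableOn f S ν →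
        IntegrableOn (fun x => g x * f x) S ν := by
      intro g f S hb hf
      exact Integrable.bdd_mul (c := 1) hf g.continuous.aestronglyMeasurable.restrict
        (ae_of_all _ fun x => by simpa [Real.norm_eq_abs] using hb x)
    have hUG : ∀ (g : {g : C(EuclideanSpace ℝ (Fin n), ℝ) // tsupport g ⊆ G ∧ ∀ x, |g x| ≤ 1})
        (f : EuclideanSpace ℝ (Fin n) → ℝ), IntegrableOn f G ν →
        ∫ x in U, g.1 x * f x ∂ν = ∫ x in G, g.1 x * f x ∂ν := by
      intro g f hf
      refine setIntegral_eq_of_zero_off hGU hGo.measurableSet hU.measurableSet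
        (fun x hx => ?_) (hintmul g.1 f G g.2.2 hf)
      rw [image_eq_zero_of_notMem_tsupport (fun hts => hx (g.2.1 hts)), zero_mul]
    have heq : ∀ i, (∫ x in G, |θ₀ x - θ i x| ∂ν) =
        ⨆ g : {g : C(EuclideanSpace ℝ (Fin n), ℝ) // tsupport g ⊆ G ∧ ∀ x, |g x| ≤ 1},
          ((∫ x in U, g.1 x * θ₀ x ∂ν) - ∫ x in U, g.1 x * θ i x ∂ν) := by
      intro i
      rw [duality ν (F := fun x => θ₀ x - θ i x) (hθ₀.sub (hθ i)) hGo (hfinF i)]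
      refine iSup_congr fun g => ?_
      rw [hUG g θ₀ hIθ₀G, hUG g (θ i) (hIθG i),
        ← integral_sub (hintmul g.1 θ₀ G g.2.2 hIθ₀G) (hintmul g.1 (θ i) G g.2.2 (hIθG i))]
      refine setIntegral_congr_fun hGo.measurableSet fun x _ => ?_
      ring
    refine ⟨heq, ?_⟩
    -- squeeze
    haveI hneG : Nonempty {g : C(EuclideanSpace ℝ (Fin n), ℝ) // tsupport g ⊆ G ∧ ∀ x, |g x| ≤ 1} :=
      ⟨⟨0, by simp [tsupport, Function.support], fun x => by simp⟩⟩
    have hbddK : ∀ i, BddAbove (Set.range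
        (fun g : {g : C(EuclideanSpace ℝ (Fin n), ℝ) // tsupport g ⊆ closure G ∧ ∀ x, |g x| ≤ 1} =>
          |(∫ x in U, g.1 x * θ₀ x ∂ν) - ∫ x in U, g.1 x * θ i x ∂ν|)) := by
      intro i
      refine ⟨(∫ x in closure G, |θ₀ x| ∂ν) + ∫ x in closure G, |θ i x| ∂ν, ?_⟩
      rintro y ⟨g, rfl⟩
      dsimp only
      have e1 : ∫ x in U, g.1 x * θ₀ x ∂ν = ∫ x in closure G, g.1 x * θ₀ x ∂ν := by
        refine setIntegral_eq_of_zero_off hGcl hGc.isClosed.measurableSet hU.measurableSet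
          (fun x hx => ?_) (hintmul g.1 θ₀ (closure G) g.2.2 (hIntθ₀ _ hGcl hGc))
        rw [image_eq_zero_of_notMem_tsupport (fun hts => hx (g.2.1 hts)), zero_mul]
      have e2 : ∫ x in U, g.1 x * θ i x ∂ν = ∫ x in closure G, g.1 x * θ i x ∂ν := by
        refine setIntegral_eq_of_zero_off hGcl hGc.isClosed.measurableSet hU.measurableSet
          (fun x hx => ?_) (hintmul g.1 (θ i) (closure G) g.2.2 (hIntθ _ hGcl hGc i))
        rw [image_eq_zero_of_notMem_tsupport (fun hts => hx (g.2.1 hts)), zero_mul]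
      rw [e1, e2]
      calc |(∫ x in closure G, g.1 x * θ₀ x ∂ν) - ∫ x in closure G, g.1 x * θ i x ∂ν|
          ≤ |∫ x in closure G, g.1 x * θ₀ x ∂ν| + |∫ x in closure G, g.1 x * θ i x ∂ν| :=
            abs_sub _ _
        _ ≤ (∫ x in closure G, |θ₀ x| ∂ν) + ∫ x in closure G, |θ i x| ∂ν :=
            add_le_add
              (bound_integral_mul g.2.2 g.1.continuous.aestronglyMeasurable.restrict
                (hIntθ₀ _ hGcl hGc))
              (bound_integral_mul g.2.2 g.1.continuous.aestronglyMeasurable.restrict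
                (hIntθ _ hGcl hGc i))
    have hle : ∀ i, (∫ x in G, |θ₀ x - θ i x| ∂ν) ≤
        ⨆ g : {g : C(EuclideanSpace ℝ (Fin n), ℝ) // tsupport g ⊆ closure G ∧ ∀ x, |g x| ≤ 1},
          |(∫ x in U, g.1 x * θ₀ x ∂ν) - ∫ x in U, g.1 x * θ i x ∂ν| := by
      intro i
      rw [heq i]
      refine ciSup_le fun g => ?_
      exact le_trans (le_abs_self _)
        (le_ciSup (hbddK i) ⟨g.1, g.2.1.trans subset_closure, g.2.2⟩)
    exact tendsto_of_tendsto_of_tendsto_of_le_of_le tendsto_const_nhds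
      (hconv (closure G) hGcl hGc)
      (fun i => setIntegral_nonneg hGo.measurableSet fun x _ => abs_nonneg _) hle
  -- the exhaustion
  obtain ⟨s, hsopen, hsU, hscomp, hsclos, hsmono, hsUnion⟩ := exists_exhaustion hU
  have hT : ∀ j, Tendsto (fun i => ∫ x in s j, |θ₀ x - θ i x| ∂ν) atTop (𝓝 0) :=
    fun j => (hpart1 (s j) (hsU j) (hsopen j) (hscomp j) (hsclos j)).2
  have hNex : ∀ j, ∃ Nj, ∀ i ≥ Nj, (∫ x in s j, |θ₀ x - θ i x| ∂ν) < (1/2 : ℝ) ^ j :=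
    fun j => eventually_atTop.mp ((hT j).eventually_lt_const (by positivity))
  choose N hN using hNex
  set φ : ℕ → ℕ := fun k => Nat.rec (N 0) (fun k ih => max (N (k + 1)) (ih + 1)) k with hφdef
  have hφsucc : ∀ k, φ (k + 1) = max (N (k + 1)) (φ k + 1) := fun k => rfl
  have hφmono : StrictMono φ := strictMono_nat_of_lt_succ fun k => by
    rw [hφsucc]
    exact lt_of_lt_of_le (Nat.lt_succ_self _) (le_max_right _ _)
  have hφN : ∀ k, N k ≤ φ k := by
    intro k
    cases k with
    | zero => exact le_refl _
    | succ k => rw [hφsucc]; exact le_max_left _ _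
  have hφbound : ∀ k, (∫ x in s k, |θ₀ x - θ (φ k) x| ∂ν) < (1/2 : ℝ) ^ k :=
    fun k => hN k (φ k) (hφN k)
  have hIabs : ∀ i j, IntegrableOn (fun x => |θ₀ x - θ i x|) (s j) ν := by
    intro i j
    exact (((hIntθ₀ _ (hsclos j) (hscomp j)).mono_set subset_closure).sub
      ((hIntθ _ (hsclos j) (hscomp j) i).mono_set subset_closure)).abs
  have key : ∀ j, ∀ᵐ x ∂ν.restrict (s j), Tendsto (fun k => θ (φ k) x) atTop (𝓝 (θ₀ x)) := by
    intro j
    have hck : ∀ k, (∫⁻ x in s j, ENNReal.ofReal |θ₀ x - θ (φ (k + j)) x| ∂ν) ≤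
        ENNReal.ofReal ((1/2 : ℝ) ^ k) := by
      intro k
      calc (∫⁻ x in s j, ENNReal.ofReal |θ₀ x - θ (φ (k + j)) x| ∂ν)
          ≤ ∫⁻ x in s (k + j), ENNReal.ofReal |θ₀ x - θ (φ (k + j)) x| ∂ν :=
            lintegral_mono_set (hsmono le_add_self)
        _ = ENNReal.ofReal (∫ x in s (k + j), |θ₀ x - θ (φ (k + j)) x| ∂ν) :=
            (ofReal_integral_eq_lintegral_ofReal (hIabs _ _)
              (ae_of_all _ fun x => abs_nonneg _)).symm
        _ ≤ ENNReal.ofReal ((1/2 : ℝ) ^ (k + j)) :=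
            ENNReal.ofReal_le_ofReal (hφbound (k + j)).le
        _ ≤ ENNReal.ofReal ((1/2 : ℝ) ^ k) :=
            ENNReal.ofReal_le_ofReal
              (pow_le_pow_of_le_one (by norm_num) (by norm_num) (Nat.le_add_right _ _))
    have hsum : (∑' k, ∫⁻ x in s j, ENNReal.ofReal |θ₀ x - θ (φ (k + j)) x| ∂ν) < ∞ :=
      lt_of_le_of_lt (ENNReal.tsum_le_tsum hck) geom_sum_lt_top
    have hlint : (∫⁻ x in s j, ∑' k, ENNReal.ofReal |θ₀ x - θ (φ (k + j)) x| ∂ν) < ∞ := by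
      rw [lintegral_tsum (f := fun k x => ENNReal.ofReal |θ₀ x - θ (φ (k + j)) x|) (fun k =>
        ((hθ₀.sub (hθ (φ (k + j)))).abs.ennreal_ofReal).aemeasurable)]
      exact hsum
    have hae : ∀ᵐ x ∂ν.restrict (s j),
        (∑' k, ENNReal.ofReal |θ₀ x - θ (φ (k + j)) x|) < ∞ :=
      ae_lt_top (Measurable.ennreal_tsum fun k =>
        (hθ₀.sub (hθ (φ (k + j)))).abs.ennreal_ofReal) hlint.ne
    filter_upwards [hae] with x hx
    have hsummable : Summable fun k => |θ₀ x - θ (φ (k + j)) x| := by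
      have h1 := ENNReal.summable_toReal hx.ne
      have h2 : (fun k => (ENNReal.ofReal |θ₀ x - θ (φ (k + j)) x|).toReal) =
          fun k => |θ₀ x - θ (φ (k + j)) x| := by
        funext k
        exact ENNReal.toReal_ofReal (abs_nonneg _)
      rwa [h2] at h1
    have h0 : Tendsto (fun k => |θ₀ x - θ (φ (k + j)) x|) atTop (𝓝 0) :=
      hsummable.tendsto_atTop_zero
    have h1 : Tendsto (fun k => θ (φ (k + j)) x) atTop (𝓝 (θ₀ x)) := by
      rw [tendsto_iff_dist_tendsto_zero]
      simpa [Real.dist_eq, abs_sub_comm] using h0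
    exact (tendsto_add_atTop_iff_nat j).mp h1
  have part2ae : ∀ᵐ x ∂ν.restrict U, Tendsto (fun k => θ (φ k) x) atTop (𝓝 (θ₀ x)) :=
    ae_restrict_of_iUnion ν (fun j => (hsopen j).measurableSet) hU.measurableSet hsUnion key
  refine ⟨hpart1, ⟨φ, hφmono, part2ae⟩, ?_⟩
  intro hint
  have hall : ∀ᵐ x ∂ν.restrict U, ∀ k : ℕ, ∃ q : ℕ, θ (φ k) x = q :=
    ae_all_iff.mpr fun k => hint (φ k)
  filter_upwards [hall, part2ae] with x hx htend
  have hmem : ∀ k, θ (φ k) x ∈ Set.range ((↑) : ℕ → ℝ) := by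
    intro k
    obtain ⟨q, hq⟩ := hx k
    exact ⟨q, hq.symm⟩
  have hcl : IsClosed (Set.range ((↑) : ℕ → ℝ)) :=
    Nat.isClosedEmbedding_coe_real.isClosed_range
  obtain ⟨q, hq⟩ := hcl.mem_of_tendsto htend (Eventually.of_forall hmem)
  exact ⟨q, hq.symm⟩
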